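/- arXiv:1906.05635 — 4 statements merged into one kernel-verified Lean document; each statement's English description precedes it below -/
import Mathlib

section
/- Let A be a real d×d matrix with all eigenvalues of strictly negative real part and B₁,…,B_d > 0. If H : ℝ^d → ℝ is a C¹ function with H(0) = 1 satisfying −∑_ℓ B_ℓ p_ℓ² H(p) + ∑_ℓ p_ℓ ∑_j A_{ℓ,j} ∂_{p_j} H(p) = 0 for all p ∈ ℝ^d, then H(p) = exp(−⟨p, S p⟩) where S = ∫₀^∞ e^{τA} diag(B) e^{τAᵀ} dτ. In particular the solution is unique. -/
open MeasureTheory Matrix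


section Aux

open NormedSpace Filter
attribute [local instance] Matrix.linftyOpSemiNormedRing Matrix.linftyOpNormedRing
  Matrix.linftyOpNormedAlgebra

variable {d : ℕ}

/-- Bound for `(1+t)^K * exp (-ε t)` on `t ≥ 0`. -/
private lemma poly_exp_bound (K : ℕ) {ε : ℝ} (hε : 0 < ε) :
    ∃ C : ℝ, ∀ t : ℝ, 0 ≤ t → (1+t)^K * Real.exp (-ε * t) ≤ C := by
  set g : ℝ → ℝ := fun t => (1+t)^K * Real.exp (-ε * t) with hg
  have hgc : Continuous g :=
    ((continuous_const.add continuous_id).pow K).mul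
      (Real.continuous_exp.comp (continuous_const.mul continuous_id))
  have htend : Tendsto g atTop (nhds 0) := by
    have h1 : Tendsto (fun t : ℝ => ε * (1 + t)) atTop atTop :=
      (tendsto_atTop_add_const_left _ 1 tendsto_id).const_mul_atTop hε
    have h2 := (Real.tendsto_pow_mul_exp_neg_atTop_nhds_zero K).comp h1
    have heq : g = fun t => (ε⁻¹ ^ K * Real.exp ε) * ((ε * (1+t))^K * Real.exp (-(ε * (1+t)))) := by
      funext t
      rw [hg]
      simp only [mul_pow, ← Real.exp_add]
      rw [← mul_assoc, ← mul_assoc, mul_comm (ε⁻¹ ^ K) (Real.exp ε),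
        mul_assoc (Real.exp ε), ← mul_pow, inv_mul_cancel₀ hε.ne', one_pow, mul_one]
      rw [mul_comm (Real.exp ε), mul_assoc, ← Real.exp_add]
      ring_nf
    rw [heq]
    simpa using (h2.const_mul ((ε⁻¹ ^ K * Real.exp ε)))
  obtain ⟨T, hT⟩ := (htend.eventually_lt_const (by norm_num : (0:ℝ) < 1)).exists_forall_of_atTop
  obtain ⟨C, hC⟩ := (isCompact_Icc (a := (0:ℝ)) (b := max T 0)).exists_bound_of_continuousOn
    hgc.continuousOn
  refine ⟨max C 1, fun t ht => ?_⟩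
  rcases le_or_gt t (max T 0) with h | h
  · exact le_trans (le_trans (le_abs_self _) (hC t ⟨ht, h⟩)) (le_max_left _ _)
  · exact le_trans (hT t (le_of_lt (lt_of_le_of_lt (le_max_left T 0) h))).le (le_max_right _ _)

private lemma exp_scalar_smul_one (c : ℂ) :
    exp (c • (1 : Matrix (Fin d) (Fin d) ℂ)) = Complex.exp c • (1 : Matrix (Fin d) (Fin d) ℂ) := by
  have h1 : (c • (1 : Matrix (Fin d) (Fin d) ℂ)) = algebraMap ℂ _ c := by
    rw [Algebra.algebraMap_eq_smul_one]
  have h2 := map_exp (algebraMap ℂ (Matrix (Fin d) (Fin d) ℂ)) (continuous_algebraMap _ _) c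
  rw [h1]; refine h2.symm.trans ?_; rw [Algebra.algebraMap_eq_smul_one]
  congr 1
  rw [← Complex.exp_eq_exp_ℂ]

private lemma exp_split (M : Matrix (Fin d) (Fin d) ℂ) (μ : ℂ) (t : ℝ) :
    exp (t • M) = Complex.exp (t • μ) • exp (t • (M - μ • (1 : Matrix (Fin d) (Fin d) ℂ))) := by
  have hsum : t • M = t • (M - μ • (1 : Matrix (Fin d) (Fin d) ℂ)) + (t • μ) • 1 := by
    rw [smul_assoc, smul_sub, sub_add_cancel]
  have hcomm : Commute (t • (M - μ • (1 : Matrix (Fin d) (Fin d) ℂ))) ((t • μ) • 1) :=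
    (((Commute.one_right (M - μ • 1)).smul_right _).smul_left _)
  rw [hsum, Matrix.exp_add_of_commute _ _ hcomm, exp_scalar_smul_one, mul_smul_comm, mul_one]

private lemma exp_mulVec_eq_sum (N : Matrix (Fin d) (Fin d) ℂ) (v : Fin d → ℂ) (K : ℕ)
    (hK : N ^ K *ᵥ v = 0) (t : ℝ) :
    exp (t • N) *ᵥ v = ∑ k ∈ Finset.range K, ((k.factorial : ℝ))⁻¹ • t ^ k • (N ^ k *ᵥ v) := by
  classical
  let L0 : Matrix (Fin d) (Fin d) ℂ →ₗ[ℝ] (Fin d → ℂ) :=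
    { toFun := fun X => X *ᵥ v
      map_add' := fun X Y => Matrix.add_mulVec X Y v
      map_smul' := fun c X => Matrix.smul_mulVec c X v }
  let L : Matrix (Fin d) (Fin d) ℂ →L[ℝ] (Fin d → ℂ) := LinearMap.toContinuousLinearMap L0
  have hL : ∀ X, X *ᵥ v = L X := fun X => rfl
  rw [exp_eq_tsum ℝ, hL, L.map_tsum (expSeries_summable' (𝕂 := ℝ) (t • N))]
  have hterm : ∀ k : ℕ, L (((k.factorial : ℝ))⁻¹ • (t • N) ^ k)
      = ((k.factorial : ℝ))⁻¹ • t ^ k • (N ^ k *ᵥ v) := by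
    intro k
    rw [_root_.map_smul, smul_pow, _root_.map_smul]
    rfl
  have hzero : ∀ k ∉ Finset.range K, L (((k.factorial : ℝ))⁻¹ • (t • N) ^ k) = 0 := by
    intro k hk
    rw [hterm k]
    have hkK : K ≤ k := by simpa using hk
    have : N ^ k *ᵥ v = 0 := by
      rw [← Nat.sub_add_cancel hkK, pow_add, ← Matrix.mulVec_mulVec, hK, Matrix.mulVec_zero]
    simp [this]
  rw [tsum_eq_sum hzero]
  exact Finset.sum_congr rfl fun k _ => hterm k

private lemma decay_of_mem (M : Matrix (Fin d) (Fin d) ℂ) {ε : ℝ} (hε : 0 < ε)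
    (hspec : ∀ z ∈ spectrum ℂ M, z.re ≤ -(2*ε)) (μ : ℂ) (v : Fin d → ℂ)
    (hv : v ∈ Module.End.maxGenEigenspace (Matrix.toLinAlgEquiv' M) μ) :
    ∃ C : ℝ, ∀ t : ℝ, 0 ≤ t → ‖exp (t • M) *ᵥ v‖ ≤ C * Real.exp (-ε * t) := by
  classical
  rcases eq_or_ne v 0 with rfl | hv0
  · exact ⟨0, fun t ht => by simp [Matrix.mulVec_zero, Real.exp_nonneg]⟩
  obtain ⟨K, hK⟩ := (Module.End.mem_maxGenEigenspace _ _ _).1 hv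
  have hvK : v ∈ Module.End.genEigenspace (Matrix.toLinAlgEquiv' M) μ K := by
    rw [Module.End.mem_genEigenspace]
    exact ⟨K, le_rfl, by simpa using hK⟩
  have hgen : Module.End.HasGenEigenvalue (Matrix.toLinAlgEquiv' M) μ K :=
    Submodule.ne_bot_iff _ |>.2 ⟨v, hvK, hv0⟩
  have hev := Module.End.hasEigenvalue_of_hasGenEigenvalue hgen
  have hμre : μ.re ≤ -(2*ε) := by
    refine hspec μ ?_
    rw [← AlgEquiv.spectrum_eq (Matrix.toLinAlgEquiv' (R := ℂ) (n := Fin d)) M]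
    exact Module.End.hasEigenvalue_iff_mem_spectrum.1 hev
  set N := M - μ • (1 : Matrix (Fin d) (Fin d) ℂ) with hN
  have hNK : N ^ K *ᵥ v = 0 := by
    have h1 : Matrix.toLinAlgEquiv' (N ^ K) v = 0 := by
      rw [map_pow, hN, map_sub, _root_.map_smul, _root_.map_one]
      exact hK
    rw [Matrix.toLinAlgEquiv'_apply] at h1
    exact h1
  obtain ⟨C₁, hC₁⟩ := poly_exp_bound K hε
  set C₀ := ∑ k ∈ Finset.range K, ‖N ^ k *ᵥ v‖ with hC₀def
  have hC₀ : 0 ≤ C₀ := Finset.sum_nonneg fun _ _ => norm_nonneg _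
  have hC₁0 : 0 ≤ C₁ := le_trans (by positivity) (hC₁ 0 le_rfl)
  refine ⟨C₀ * C₁, fun t ht => ?_⟩
  rw [exp_split M μ t, Matrix.smul_mulVec, norm_smul]
  have habs : ‖Complex.exp (t • μ)‖ = Real.exp (t * μ.re) := by
    rw [Complex.norm_exp]
    congr 1
    rw [Complex.real_smul, Complex.re_ofReal_mul]
  have hb : ‖exp (t • N) *ᵥ v‖ ≤ C₀ * (1+t)^K := by
    rw [exp_mulVec_eq_sum N v K hNK t]
    refine (norm_sum_le _ _).trans ?_
    rw [hC₀def, Finset.sum_mul]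
    refine Finset.sum_le_sum fun k hk => ?_
    rw [norm_smul, norm_smul]
    have h1 : ‖((k.factorial : ℝ))⁻¹‖ ≤ 1 := by
      rw [Real.norm_eq_abs, abs_of_nonneg (by positivity)]
      apply inv_le_one_of_one_le₀
      exact_mod_cast Nat.one_le_iff_ne_zero.2 k.factorial_ne_zero
    have h2 : ‖t ^ k‖ ≤ (1+t)^K := by
      rw [Real.norm_eq_abs, abs_of_nonneg (pow_nonneg ht k)]
      calc t^k ≤ (1+t)^k := pow_le_pow_left₀ ht (by linarith) k
        _ ≤ (1+t)^K := pow_le_pow_right₀ (by linarith) (Finset.mem_range.1 hk).le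
    calc ‖((k.factorial : ℝ))⁻¹‖ * (‖t ^ k‖ * ‖N ^ k *ᵥ v‖)
        ≤ 1 * ((1+t)^K * ‖N ^ k *ᵥ v‖) := by
          refine mul_le_mul h1 (mul_le_mul h2 le_rfl (norm_nonneg _) (by positivity))
            (by positivity) zero_le_one
      _ = ‖N ^ k *ᵥ v‖ * (1+t)^K := by ring
  have hexp : Real.exp (t * μ.re) ≤ Real.exp (-ε*t) * Real.exp (-ε*t) := by
    rw [← Real.exp_add]
    apply Real.exp_le_exp.2
    nlinarith
  calc ‖Complex.exp (t • μ)‖ * ‖exp (t • N) *ᵥ v‖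
      ≤ (Real.exp (-ε*t) * Real.exp (-ε*t)) * (C₀ * (1+t)^K) := by
        rw [habs]
        exact mul_le_mul hexp hb (norm_nonneg _) (by positivity)
    _ = C₀ * ((1+t)^K * Real.exp (-ε*t)) * Real.exp (-ε*t) := by ring
    _ ≤ C₀ * C₁ * Real.exp (-ε*t) := by
        refine mul_le_mul_of_nonneg_right ?_ (Real.exp_nonneg _)
        exact mul_le_mul_of_nonneg_left (hC₁ t ht) hC₀

private noncomputable def good (M : Matrix (Fin d) (Fin d) ℂ) (ε : ℝ) :
    Submodule ℂ (Fin d → ℂ) where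
  carrier := {v | ∃ C : ℝ, ∀ t : ℝ, 0 ≤ t → ‖exp (t • M) *ᵥ v‖ ≤ C * Real.exp (-ε * t)}
  add_mem' := by
    rintro v w ⟨C₁, h₁⟩ ⟨C₂, h₂⟩
    refine ⟨C₁ + C₂, fun t ht => ?_⟩
    rw [Matrix.mulVec_add, add_mul]
    exact (norm_add_le _ _).trans (add_le_add (h₁ t ht) (h₂ t ht))
  zero_mem' := ⟨0, fun t ht => by simp [Matrix.mulVec_zero, Real.exp_nonneg]⟩
  smul_mem' := by
    rintro c v ⟨C, h⟩
    refine ⟨‖c‖ * C, fun t ht => ?_⟩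
    rw [Matrix.mulVec_smul, norm_smul, mul_assoc]
    exact mul_le_mul_of_nonneg_left (h t ht) (norm_nonneg c)

private lemma exists_gap (M : Matrix (Fin d) (Fin d) ℂ) (hM : ∀ z ∈ spectrum ℂ M, z.re < 0) :
    ∃ ε : ℝ, 0 < ε ∧ ∀ z ∈ spectrum ℂ M, z.re ≤ -(2*ε) := by
  rcases Set.eq_empty_or_nonempty (spectrum ℂ M) with h | hne
  · exact ⟨1, one_pos, by simp [h]⟩
  · obtain ⟨z0, hz0, hmax⟩ := (spectrum.isCompact M).exists_isMaxOn hne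
      Complex.continuous_re.continuousOn
    refine ⟨-z0.re/2, by have := hM z0 hz0; linarith, fun z hz => ?_⟩
    have h2 := hmax hz
    simp only [Set.mem_setOf_eq] at h2
    linarith [hM z0 hz0]

private lemma decay_complex (M : Matrix (Fin d) (Fin d) ℂ)
    (hM : ∀ z ∈ spectrum ℂ M, z.re < 0) :
    ∃ ε : ℝ, 0 < ε ∧ ∀ v : Fin d → ℂ, ∃ C : ℝ, ∀ t : ℝ, 0 ≤ t →
      ‖exp (t • M) *ᵥ v‖ ≤ C * Real.exp (-ε * t) := by
  obtain ⟨ε, hε, hspec⟩ := exists_gap M hM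
  refine ⟨ε, hε, fun v => ?_⟩
  have hle : ∀ μ : ℂ, Module.End.maxGenEigenspace (Matrix.toLinAlgEquiv' M) μ ≤ good M ε :=
    fun μ w hw => decay_of_mem M hε hspec μ w hw
  have htop := Module.End.iSup_maxGenEigenspace_eq_top (K := ℂ) (Matrix.toLinAlgEquiv' M)
  have hvmem : v ∈ good M ε := by
    have h1 : v ∈ (⊤ : Submodule ℂ (Fin d → ℂ)) := trivial
    rw [← htop] at h1
    exact iSup_le hle h1
  exact hvmem

private lemma exp_map_complex (A : Matrix (Fin d) (Fin d) ℝ) (t : ℝ) :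
    (exp (t • A)).map (algebraMap ℝ ℂ) = exp (t • A.map (algebraMap ℝ ℂ)) := by
  have h := map_exp
    ((algebraMap ℝ ℂ).mapMatrix : Matrix (Fin d) (Fin d) ℝ →+* Matrix (Fin d) (Fin d) ℂ)
    (Continuous.matrix_map continuous_id (continuous_algebraMap ℝ ℂ)) (t • A)
  simp [RingHom.mapMatrix_apply, Matrix.map_smul] at h ⊢; exact h

private lemma decay_real (A : Matrix (Fin d) (Fin d) ℝ)
    (hA : ∀ z ∈ spectrum ℂ (A.map (algebraMap ℝ ℂ)), z.re < 0) :
    ∃ ε : ℝ, 0 < ε ∧ ∀ v : Fin d → ℝ, ∃ C : ℝ, 0 ≤ C ∧ ∀ t : ℝ, 0 ≤ t →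
      ∀ i, |(exp (t • A) *ᵥ v) i| ≤ C * Real.exp (-ε * t) := by
  obtain ⟨ε, hε, hdec⟩ := decay_complex (A.map (algebraMap ℝ ℂ)) hA
  refine ⟨ε, hε, fun v => ?_⟩
  obtain ⟨C, hC⟩ := hdec (fun i => (v i : ℂ))
  refine ⟨max C 0, le_max_right _ _, fun t ht i => ?_⟩
  have hkey : ∀ j, ((exp (t • A) *ᵥ v) j : ℂ)
      = (exp (t • A.map (algebraMap ℝ ℂ)) *ᵥ fun i => (v i : ℂ)) j := by
    intro j
    rw [← exp_map_complex A t]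
    simp [Matrix.mulVec, dotProduct, Matrix.map_apply]
  have h1 : |(exp (t • A) *ᵥ v) i|
      = ‖(exp (t • A.map (algebraMap ℝ ℂ)) *ᵥ fun i => (v i : ℂ)) i‖ := by
    rw [← hkey i, Complex.norm_real, Real.norm_eq_abs]
  rw [h1]
  refine le_trans (le_trans (norm_le_pi_norm _ i) (hC t ht)) ?_
  exact mul_le_mul_of_nonneg_right (le_max_left _ _) (Real.exp_nonneg _)

private lemma spectrum_transpose (M : Matrix (Fin d) (Fin d) ℂ) :
    spectrum ℂ Mᵀ = spectrum ℂ M := by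
  ext z
  simp only [spectrum.mem_iff]
  have h1 : algebraMap ℂ (Matrix (Fin d) (Fin d) ℂ) z - Mᵀ
      = (algebraMap ℂ (Matrix (Fin d) (Fin d) ℂ) z - M)ᵀ := by
    rw [Matrix.transpose_sub]
    congr 1
    rw [Algebra.algebraMap_eq_smul_one, Matrix.transpose_smul, Matrix.transpose_one]
  rw [h1]
  constructor <;> intro h hu <;> apply h
  · rw [Matrix.isUnit_iff_isUnit_det, Matrix.det_transpose, ← Matrix.isUnit_iff_isUnit_det]
    exact hu
  · rw [Matrix.isUnit_iff_isUnit_det, Matrix.det_transpose, ← Matrix.isUnit_iff_isUnit_det] at hu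
    exact hu

private lemma q_hasDerivAt (B : Matrix (Fin d) (Fin d) ℝ) (p : Fin d → ℝ) (s : ℝ) :
    HasDerivAt (fun s : ℝ => exp (s • B) *ᵥ p) (B *ᵥ (exp (s • B) *ᵥ p)) s := by
  let L0 : Matrix (Fin d) (Fin d) ℝ →ₗ[ℝ] (Fin d → ℝ) :=
    { toFun := fun X => X *ᵥ p
      map_add' := fun X Y => Matrix.add_mulVec X Y p
      map_smul' := fun c X => Matrix.smul_mulVec c X p }
  let L : Matrix (Fin d) (Fin d) ℝ →L[ℝ] (Fin d → ℝ) := LinearMap.toContinuousLinearMap L0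
  have h := hasDerivAt_exp_smul_const (𝕂 := ℝ) B s
  have h2 := L.hasFDerivAt.comp_hasDerivAt s h
  have h3 : L (exp (s • B) * B) = B *ᵥ (exp (s • B) *ᵥ p) := by
    show (exp (s • B) * B) *ᵥ p = _
    have hc : exp (s • B) * B = B * exp (s • B) := (((Commute.refl B).smul_left s).exp_left).eq
    rw [hc, Matrix.mulVec_mulVec]
  exact h2.congr_deriv h3

private lemma q_continuous (B : Matrix (Fin d) (Fin d) ℝ) (p : Fin d → ℝ) :
    Continuous (fun s : ℝ => exp (s • B) *ᵥ p) := by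
  let L0 : Matrix (Fin d) (Fin d) ℝ →ₗ[ℝ] (Fin d → ℝ) :=
    { toFun := fun X => X *ᵥ p
      map_add' := fun X Y => Matrix.add_mulVec X Y p
      map_smul' := fun c X => Matrix.smul_mulVec c X p }
  let L : Matrix (Fin d) (Fin d) ℝ →L[ℝ] (Fin d → ℝ) := LinearMap.toContinuousLinearMap L0
  exact L.continuous.comp (exp_continuous.comp (continuous_id.smul continuous_const))

private lemma fderiv_expand (H : (Fin d → ℝ) → ℝ) (x v : Fin d → ℝ) :
    fderiv ℝ H x v = ∑ j, v j * fderiv ℝ H x (Pi.single j 1) := by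
  have hv : v = ∑ j, v j • (Pi.single j (1:ℝ) : Fin d → ℝ) := by
    ext i
    simp [Pi.single_apply]
  conv_lhs => rw [hv]
  rw [map_sum]
  exact Finset.sum_congr rfl fun j _ => by rw [_root_.map_smul]; rfl

end Aux

section Main

open NormedSpace Filter
attribute [local instance] Matrix.linftyOpSemiNormedRing Matrix.linftyOpNormedRing
  Matrix.linftyOpNormedAlgebra

/-- Let `A` be a real `d×d` matrix with all eigenvalues of strictly negative real part
and `b₁,…,b_d > 0`.  If `H : ℝ^d → ℝ` is a `C¹` function with `H(0) = 1` satisfying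
`−∑_ℓ b_ℓ p_ℓ² H(p) + ∑_ℓ p_ℓ ∑_j A_{ℓ,j} ∂_{p_j} H(p) = 0` for all `p`, then
`H(p) = exp(−⟨p, S p⟩)` where `S = ∫₀^∞ e^{τA} diag(b) e^{τAᵀ} dτ`; in particular
the solution is unique. -/
theorem pde_solution_unique (d : ℕ) (A : Matrix (Fin d) (Fin d) ℝ)
    (b : Fin d → ℝ) (hb : ∀ i, 0 < b i)
    (hA : ∀ z ∈ spectrum ℂ (A.map (algebraMap ℝ ℂ)), z.re < 0)
    (S : Matrix (Fin d) (Fin d) ℝ)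
    (hS : S = Matrix.of fun i j => ∫ τ in Set.Ioi (0 : ℝ),
      (NormedSpace.exp (τ • A) * Matrix.diagonal b *
        (NormedSpace.exp (τ • A))ᵀ) i j)
    (H : (Fin d → ℝ) → ℝ)
    (hreg : ContDiff ℝ 1 H) (h0 : H 0 = 1)
    (hpde : ∀ p : Fin d → ℝ,
      -(∑ ℓ, b ℓ * (p ℓ) ^ 2) * H p
        + ∑ ℓ, p ℓ * ∑ j, A ℓ j * fderiv ℝ H p (Pi.single j 1) = 0) :
    ∀ p : Fin d → ℝ, H p = Real.exp (-(p ⬝ᵥ S.mulVec p)) := by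
  classical
  have hAT : ∀ z ∈ spectrum ℂ ((Aᵀ).map (algebraMap ℝ ℂ)), z.re < 0 := by
    intro z hz
    apply hA
    rw [Matrix.transpose_map, spectrum_transpose] at hz
    exact hz
  obtain ⟨ε, hε, hdec⟩ := decay_real Aᵀ hAT
  -- transpose identity for the exponential
  have hTexp : ∀ t : ℝ, exp (t • Aᵀ) = (exp (t • A))ᵀ := by
    intro t
    rw [← Matrix.transpose_smul, Matrix.exp_transpose]
  -- entrywise bounds on exp (t • A)
  choose Cb hCb0 hCb using fun i : Fin d => hdec (Pi.single i 1)
  have hEntry : ∀ t : ℝ, 0 ≤ t → ∀ i ℓ, |exp (t • A) i ℓ| ≤ Cb i * Real.exp (-ε * t) := by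
    intro t ht i ℓ
    have h := hCb i t ht ℓ
    rw [Matrix.mulVec_single_one, hTexp t] at h
    exact h
  -- exponential decay integrable bound helper
  have hexpint : ∀ c : ℝ, IntegrableOn (fun τ : ℝ => c * Real.exp (-(2*ε) * τ)) (Set.Ioi 0) :=
    fun c => (exp_neg_integrableOn_Ioi 0 (by positivity)).const_mul c
  have hexp2 : ∀ τ : ℝ, Real.exp (-ε*τ) * Real.exp (-ε*τ) = Real.exp (-(2*ε)*τ) := by
    intro τ
    rw [← Real.exp_add]
    ring_nf
  intro p
  obtain ⟨Cp, hCp0, hCp⟩ := hdec p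
  set q : ℝ → Fin d → ℝ := fun s => exp (s • Aᵀ) *ᵥ p with hqdef
  set c : ℝ → ℝ := fun s => ∑ ℓ, b ℓ * (q s ℓ)^2 with hcdef
  have hqc : Continuous q := q_continuous Aᵀ p
  have hcc : Continuous c := by
    apply continuous_finset_sum
    intro ℓ _
    exact continuous_const.mul (((continuous_apply ℓ).comp hqc).pow 2)
  have hcnonneg : ∀ s, 0 ≤ c s :=
    fun s => Finset.sum_nonneg fun ℓ _ => mul_nonneg (hb ℓ).le (sq_nonneg _)
  set G : ℝ → ℝ := fun s => H (q s) with hGdef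
  have hGder : ∀ s, HasDerivAt G (c s * G s) s := by
    intro s
    have h1 := q_hasDerivAt Aᵀ p s
    have hdH : DifferentiableAt ℝ H (q s) := (hreg.differentiable one_ne_zero).differentiableAt
    have h2 := hdH.hasFDerivAt.comp_hasDerivAt s h1
    have h3 : fderiv ℝ H (q s) (Aᵀ *ᵥ q s) = c s * G s := by
      rw [fderiv_expand]
      have h4 : ∀ j, (Aᵀ *ᵥ q s) j = ∑ ℓ, A ℓ j * q s ℓ := by
        intro j
        simp [Matrix.mulVec, dotProduct, Matrix.transpose_apply]
      calc ∑ j, (Aᵀ *ᵥ q s) j * fderiv ℝ H (q s) (Pi.single j 1)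
          = ∑ j, ∑ ℓ, (A ℓ j * q s ℓ) * fderiv ℝ H (q s) (Pi.single j 1) := by
            refine Finset.sum_congr rfl fun j _ => ?_
            rw [h4 j, Finset.sum_mul]
        _ = ∑ ℓ, q s ℓ * ∑ j, A ℓ j * fderiv ℝ H (q s) (Pi.single j 1) := by
            rw [Finset.sum_comm]
            refine Finset.sum_congr rfl fun ℓ _ => ?_
            rw [Finset.mul_sum]
            refine Finset.sum_congr rfl fun j _ => by ring
        _ = c s * G s := by
            have hp := hpde (q s)
            simp only [hcdef, hGdef]
            linarith
    rw [← h3]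
    exact h2
  set I : ℝ → ℝ := fun s => ∫ τ in (0:ℝ)..s, c τ with hIdef
  have hIder : ∀ s, HasDerivAt I (c s) s := fun s => (hcc.integral_hasStrictDerivAt 0 s).hasDerivAt
  set F : ℝ → ℝ := fun s => G s * Real.exp (-I s) with hFdef
  have hFder : ∀ s, HasDerivAt F 0 s := by
    intro s
    have h1 := (hGder s).mul (((hIder s).neg).exp)
    refine h1.congr_deriv ?_
    ring
  have hFconst : ∀ s, F s = F 0 :=
    fun s => is_const_of_deriv_eq_zero (fun x => (hFder x).differentiableAt)
      (fun x => (hFder x).deriv) s 0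
  have hq0 : q 0 = p := by
    rw [hqdef]
    simp
  have hF0 : F 0 = H p := by
    rw [hFdef]
    simp only [hIdef, intervalIntegral.integral_same, neg_zero, Real.exp_zero, mul_one, hGdef, hq0]
  -- integrability of c on (0, ∞)
  have hcint : IntegrableOn c (Set.Ioi (0:ℝ)) := by
    apply Integrable.mono' (hexpint ((∑ ℓ, b ℓ) * Cp^2)) hcc.aestronglyMeasurable
    refine (ae_restrict_iff' measurableSet_Ioi).2 (Filter.Eventually.of_forall fun τ hτ => ?_)
    have ht : (0:ℝ) ≤ τ := le_of_lt hτ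
    rw [Real.norm_eq_abs, abs_of_nonneg (hcnonneg τ)]
    have hsq : ∀ ℓ, (q τ ℓ)^2 ≤ Cp^2 * Real.exp (-(2*ε)*τ) := by
      intro ℓ
      have h := hCp τ ht ℓ
      have h2 : (q τ ℓ)^2 ≤ (Cp * Real.exp (-ε*τ))^2 := by
        rw [← sq_abs]
        exact pow_le_pow_left₀ (abs_nonneg _) h 2
      calc (q τ ℓ)^2 ≤ (Cp * Real.exp (-ε*τ))^2 := h2
        _ = Cp^2 * Real.exp (-(2*ε)*τ) := by rw [mul_pow, sq (Real.exp _), hexp2]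
    calc c τ ≤ ∑ ℓ, b ℓ * (Cp^2 * Real.exp (-(2*ε)*τ)) :=
          Finset.sum_le_sum fun ℓ _ => mul_le_mul_of_nonneg_left (hsq ℓ) (hb ℓ).le
      _ = ((∑ ℓ, b ℓ) * Cp^2) * Real.exp (-(2*ε)*τ) := by
          simp [Finset.sum_mul, mul_assoc]
  have hIlim : Tendsto I atTop (nhds (∫ τ in Set.Ioi (0:ℝ), c τ)) :=
    MeasureTheory.intervalIntegral_tendsto_integral_Ioi 0 hcint tendsto_id
  -- q tends to 0
  have hexp_tend : Tendsto (fun s : ℝ => Cp * Real.exp (-ε * s)) atTop (nhds 0) := by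
    have h1 : Tendsto (fun s : ℝ => ε * s) atTop atTop := tendsto_id.const_mul_atTop hε
    have h2 := Real.tendsto_exp_neg_atTop_nhds_zero.comp h1
    have h3 : ((fun x => Real.exp (-x)) ∘ fun s : ℝ => ε * s) = fun s => Real.exp (-ε * s) := by
      funext s
      simp [Function.comp, neg_mul]
    rw [h3] at h2
    simpa using h2.const_mul Cp
  have hq0lim : Tendsto q atTop (nhds 0) := by
    rw [tendsto_pi_nhds]
    intro i
    apply squeeze_zero_norm' _ hexp_tend
    filter_upwards [eventually_ge_atTop (0:ℝ)] with s hs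
    rw [Real.norm_eq_abs]
    exact hCp s hs i
  -- identify the improper integral with the quadratic form
  have hKentry : ∀ (τ : ℝ) i j,
      (exp (τ • A) * Matrix.diagonal b * (exp (τ • A))ᵀ) i j
        = ∑ ℓ, exp (τ • A) i ℓ * b ℓ * exp (τ • A) j ℓ := by
    intro τ i j
    rw [Matrix.mul_apply]
    refine Finset.sum_congr rfl fun ℓ _ => ?_
    rw [Matrix.mul_apply, Matrix.transpose_apply]
    rw [Finset.sum_eq_single ℓ]
    · rw [Matrix.diagonal_apply_eq]
    · intro k _ hk
      simp [Matrix.diagonal_apply_ne _ hk]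
    · intro hℓ
      exact absurd (Finset.mem_univ ℓ) hℓ
  have hEc : Continuous fun τ : ℝ => exp (τ • A) :=
    exp_continuous.comp (continuous_id.smul continuous_const)
  have hKint : ∀ i j, IntegrableOn
      (fun τ => (exp (τ • A) * Matrix.diagonal b * (exp (τ • A))ᵀ) i j) (Set.Ioi (0:ℝ)) := by
    intro i j
    have hcont : Continuous fun τ : ℝ =>
        (exp (τ • A) * Matrix.diagonal b * (exp (τ • A))ᵀ) i j := by
      have h1 : Continuous fun τ : ℝ =>
          exp (τ • A) * Matrix.diagonal b * (exp (τ • A))ᵀ :=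
        (hEc.matrix_mul continuous_const).matrix_mul hEc.matrix_transpose
      exact (continuous_apply j).comp ((continuous_apply i).comp h1)
    apply Integrable.mono' (hexpint ((∑ ℓ, b ℓ) * (Cb i * Cb j))) hcont.aestronglyMeasurable
    refine (ae_restrict_iff' measurableSet_Ioi).2 (Filter.Eventually.of_forall fun τ hτ => ?_)
    have ht : (0:ℝ) ≤ τ := le_of_lt hτ
    rw [Real.norm_eq_abs, hKentry]
    refine le_trans (Finset.abs_sum_le_sum_abs _ _) ?_
    have hbound : ∀ ℓ, |exp (τ • A) i ℓ * b ℓ * exp (τ • A) j ℓ|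
        ≤ b ℓ * ((Cb i * Cb j) * Real.exp (-(2*ε)*τ)) := by
      intro ℓ
      rw [abs_mul, abs_mul, abs_of_pos (hb ℓ)]
      have h1 : |exp (τ • A) i ℓ| * |exp (τ • A) j ℓ|
          ≤ (Cb i * Real.exp (-ε*τ)) * (Cb j * Real.exp (-ε*τ)) :=
        mul_le_mul (hEntry τ ht i ℓ) (hEntry τ ht j ℓ) (abs_nonneg _)
          (mul_nonneg (hCb0 i) (Real.exp_nonneg _))
      have h2 : (Cb i * Real.exp (-ε*τ)) * (Cb j * Real.exp (-ε*τ))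
          = (Cb i * Cb j) * Real.exp (-(2*ε)*τ) := by
        rw [← hexp2 τ]
        ring
      calc |exp (τ • A) i ℓ| * b ℓ * |exp (τ • A) j ℓ|
          = b ℓ * (|exp (τ • A) i ℓ| * |exp (τ • A) j ℓ|) := by ring
        _ ≤ b ℓ * ((Cb i * Cb j) * Real.exp (-(2*ε)*τ)) := by
            rw [← h2]
            exact mul_le_mul_of_nonneg_left h1 (hb ℓ).le
    refine le_trans (Finset.sum_le_sum fun ℓ _ => hbound ℓ) ?_
    simp [Finset.sum_mul, mul_assoc]
  have hptwise : ∀ τ : ℝ, c τ = ∑ i, ∑ j,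
      (p i * p j) * (exp (τ • A) * Matrix.diagonal b * (exp (τ • A))ᵀ) i j := by
    intro τ
    have hq_entry : ∀ ℓ, q τ ℓ = ∑ i, exp (τ • A) i ℓ * p i := by
      intro ℓ
      rw [hqdef]
      simp only [hTexp τ]
      simp [Matrix.mulVec, dotProduct, Matrix.transpose_apply]
    simp only [hcdef]
    calc ∑ ℓ, b ℓ * (q τ ℓ)^2
        = ∑ ℓ, ∑ i, ∑ j, (p i * p j) * (exp (τ • A) i ℓ * b ℓ * exp (τ • A) j ℓ) := by
          refine Finset.sum_congr rfl fun ℓ _ => ?_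
          rw [hq_entry ℓ, sq, Finset.sum_mul_sum, Finset.mul_sum]
          refine Finset.sum_congr rfl fun i _ => ?_
          rw [Finset.mul_sum]
          refine Finset.sum_congr rfl fun j _ => by ring
      _ = ∑ i, ∑ j, (p i * p j)
            * (exp (τ • A) * Matrix.diagonal b * (exp (τ • A))ᵀ) i j := by
          rw [Finset.sum_comm]
          refine Finset.sum_congr rfl fun i _ => ?_
          rw [Finset.sum_comm]
          refine Finset.sum_congr rfl fun j _ => ?_
          rw [hKentry, Finset.mul_sum]
  have hintegral_eq : (∫ τ in Set.Ioi (0:ℝ), c τ) = p ⬝ᵥ S.mulVec p := by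
    have h1 : (∫ τ in Set.Ioi (0:ℝ), c τ) = ∑ i, ∑ j, (p i * p j)
        * ∫ τ in Set.Ioi (0:ℝ), (exp (τ • A) * Matrix.diagonal b * (exp (τ • A))ᵀ) i j := by
      calc (∫ τ in Set.Ioi (0:ℝ), c τ)
          = ∫ τ in Set.Ioi (0:ℝ), ∑ i, ∑ j, (p i * p j)
              * (exp (τ • A) * Matrix.diagonal b * (exp (τ • A))ᵀ) i j := by
            exact integral_congr_ae (Filter.Eventually.of_forall fun τ => hptwise τ)
        _ = ∑ i, ∫ τ in Set.Ioi (0:ℝ), ∑ j, (p i * p j)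
              * (exp (τ • A) * Matrix.diagonal b * (exp (τ • A))ᵀ) i j := by
            exact integral_finset_sum _ fun i _ =>
              integrable_finset_sum _ fun j _ => (hKint i j).const_mul _
        _ = ∑ i, ∑ j, ∫ τ in Set.Ioi (0:ℝ), (p i * p j)
              * (exp (τ • A) * Matrix.diagonal b * (exp (τ • A))ᵀ) i j := by
            exact Finset.sum_congr rfl fun i _ =>
              integral_finset_sum _ fun j _ => (hKint i j).const_mul _
        _ = ∑ i, ∑ j, (p i * p j)
            * ∫ τ in Set.Ioi (0:ℝ), (exp (τ • A) * Matrix.diagonal b * (exp (τ • A))ᵀ) i j := by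
            refine Finset.sum_congr rfl fun i _ => Finset.sum_congr rfl fun j _ => ?_
            exact MeasureTheory.integral_const_mul _ _
    rw [h1, hS]
    simp only [dotProduct, Matrix.mulVec, Matrix.of_apply]
    rw [Finset.sum_congr rfl fun i _ => Finset.mul_sum (Finset.univ) _ (p i)]
    refine Finset.sum_congr rfl fun i _ => Finset.sum_congr rfl fun j _ => by ring
  -- limits
  have hGlim : Tendsto G atTop (nhds 1) := by
    have h := (hreg.continuous.tendsto 0).comp hq0lim
    rw [h0] at h
    exact h
  have hFlim : Tendsto F atTop (nhds (Real.exp (-(p ⬝ᵥ S.mulVec p)))) := by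
    have h2 : Tendsto (fun s => Real.exp (-I s)) atTop (nhds (Real.exp (-(p ⬝ᵥ S.mulVec p)))) := by
      rw [← hintegral_eq]
      exact (Real.continuous_exp.tendsto _).comp hIlim.neg
    simpa using hGlim.mul h2
  have hFlim' : Tendsto F atTop (nhds (H p)) := by
    rw [show H p = F 0 from hF0.symm]
    exact Tendsto.congr (fun s => (hFconst s).symm) tendsto_const_nhds
  exact tendsto_nhds_unique hFlim' hFlim


end Main
end

section
/- For every integer q ≥ 1, vectors n, n* ∈ ℝ^d, standard basis vector e_j, and sign ε ∈ {+1, −1}: |‖n − n* + ε e_j‖₂^{2q} − ‖n − n*‖₂^{2q} − 2qε(n_j − n*_j)‖n − n*‖₂^{2q−2}| ≤ 3^q · 2^q · (1 + ‖n − n*‖₂^{2q−2}). -/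
theorem expand_lem (x s : ℝ) (p : ℕ) :
  (x + s)^(p+1) - x^(p+1) - (p+1)*s*x^p
    = ∑ i ∈ Finset.range p, s^(i+2) * x^(p-1-i) * ((p+1).choose (i+2)) := by
  rw [add_comm x s, add_pow, Finset.sum_range_succ', Finset.sum_range_succ']
  simp
  rw [show (∑ i ∈ Finset.range p, s ^ (i + 1 + 1) * x ^ (p - (i + 1)) * ((p + 1).choose (i + 1 + 1) : ℝ))
      = ∑ i ∈ Finset.range p, s ^ (i + 2) * x ^ (p - 1 - i) * ((p + 1).choose (i + 2) : ℝ) from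
    Finset.sum_congr rfl fun i _ => by rw [show p - (i+1) = p - 1 - i by omega]]
  ring

theorem pow_le_one_add (r : ℝ) (hr : 0 ≤ r) {m M : ℕ} (h : m ≤ M) : r^m ≤ 1 + r^M := by
  rcases le_total r 1 with h1 | h1
  · have := pow_le_one₀ hr h1 (n := m)
    nlinarith [pow_nonneg hr M]
  · have := pow_le_pow_right₀ h1 h
    nlinarith [pow_nonneg hr m]

theorem coeff_sum (p : ℕ) :
    (∑ i ∈ Finset.range p, ((p+1).choose (i+2) : ℝ) * 4^(i+2)) ≤ 5^(p+1) := by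
  have h5 : (5:ℝ)^(p+1) = ∑ k ∈ Finset.range (p+2), 4^k * 1^(p+1-k) * ((p+1).choose k : ℝ) := by
    rw [← add_pow]; norm_num
  rw [h5, Finset.sum_range_succ', Finset.sum_range_succ']
  have : (∑ i ∈ Finset.range p, ((p+1).choose (i+2) : ℝ) * 4^(i+2))
      = ∑ i ∈ Finset.range p, (4:ℝ)^(i+1+1) * 1^(p+1-(i+1+1)) * ((p+1).choose (i+1+1) : ℝ) := by
    apply Finset.sum_congr rfl; intro i _; ring
  rw [this]
  have h1 : (0:ℝ) ≤ 4^(0+1) * 1^(p+1-(0+1)) * ((p+1).choose (0+1) : ℝ) := by positivity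
  have h0 : (0:ℝ) ≤ 4^0 * 1^(p+1-0) * ((p+1).choose 0 : ℝ) := by positivity
  linarith

theorem six_bound (p : ℕ) : (5:ℝ)^(p+1) + (p+1) ≤ 6^(p+1) := by
  induction p with
  | zero => norm_num
  | succ p ih =>
    have h5 : (0:ℝ) ≤ 5^(p+1) := by positivity
    push_cast at ih ⊢
    rw [show (5:ℝ)^(p+1+1) = 5^(p+1)*5 from pow_succ _ _,
        show (6:ℝ)^(p+1+1) = 6^(p+1)*6 from pow_succ _ _]
    linarith [ih, h5]

theorem key (p : ℕ) (r c : ℝ) (hr : 0 ≤ r) (hc : |c| ≤ r) :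
    |(r^2 + (2*c+1))^(p+1) - (r^2)^(p+1) - (p+1)*(2*c)*(r^2)^p|
      ≤ 6^(p+1) * (1 + r^(2*p)) := by
  have hx : (0:ℝ) ≤ r^2 := sq_nonneg r
  have hrp : (0:ℝ) ≤ r^(2*p) := pow_nonneg hr _
  have hs : |2*c+1| ≤ 2*r+1 := by
    calc |2*c+1| ≤ |2*c| + 1 := by simpa using abs_add_le (2*c) 1
    _ ≤ 2*r+1 := by rw [abs_mul]; simp; linarith [hc]
  -- term bound
  have hterm : ∀ i ∈ Finset.range p,
      |(2*c+1)^(i+2) * (r^2)^(p-1-i) * (((p+1).choose (i+2) : ℕ) : ℝ)|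
        ≤ ((p+1).choose (i+2) : ℝ) * 4^(i+2) * (1 + r^(2*p)) := by
    intro i hi
    have hip : i < p := Finset.mem_range.mp hi
    rw [abs_mul, abs_mul, abs_pow, abs_pow, abs_of_nonneg hx,
      Nat.abs_cast]
    have h1 : |2*c+1|^(i+2) ≤ (2*r+1)^(i+2) :=
      pow_le_pow_left₀ (abs_nonneg _) hs _
    have h2 : (2*r+1)^(i+2) ≤ 2^(i+2) * (r+1)^(i+2) := by
      rw [← mul_pow]
      apply pow_le_pow_left₀ (by linarith)
      linarith
    have h3 : (r+1)^(i+2) ≤ 2^(i+2-1) * (r^(i+2) + 1^(i+2)) :=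
      add_pow_le hr zero_le_one (i+2)
    have h4 : (r^(i+2) + 1) * (r^2)^(p-1-i) ≤ 2 * (1 + r^(2*p)) := by
      rw [add_mul, ← pow_mul]
      have e1 : r^(i+2) * r^(2*(p-1-i)) = r^(i+2+2*(p-1-i)) := (pow_add r _ _).symm
      rw [one_mul, e1]
      have b1 : r^(i+2+2*(p-1-i)) ≤ 1 + r^(2*p) := pow_le_one_add r hr (by omega)
      have b2 : r^(2*(p-1-i)) ≤ 1 + r^(2*p) := pow_le_one_add r hr (by omega)
      linarith
    have hxp : (0:ℝ) ≤ (r^2)^(p-1-i) := pow_nonneg hx _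
    have hch : (0:ℝ) ≤ ((p+1).choose (i+2) : ℝ) := Nat.cast_nonneg _
    have chain : |2*c+1|^(i+2) * (r^2)^(p-1-i) ≤ 4^(i+2) * (1 + r^(2*p)) := by
      calc |2*c+1|^(i+2) * (r^2)^(p-1-i)
          ≤ 2^(i+2) * (2^(i+2-1) * (r^(i+2) + 1^(i+2))) * (r^2)^(p-1-i) := by
            apply mul_le_mul_of_nonneg_right _ hxp
            exact le_trans h1 (le_trans h2 (mul_le_mul_of_nonneg_left h3 (by positivity)))
        _ = 2^(i+2) * 2^(i+1) * ((r^(i+2) + 1) * (r^2)^(p-1-i)) := by norm_num; ring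
        _ ≤ 2^(i+2) * 2^(i+1) * (2 * (1 + r^(2*p))) := by
            apply mul_le_mul_of_nonneg_left h4 (by positivity)
        _ = 2^(2*(i+2)) * (1 + r^(2*p)) := by ring
        _ = 4^(i+2) * (1 + r^(2*p)) := by rw [pow_mul]; norm_num
    calc |2*c+1|^(i+2) * (r^2)^(p-1-i) * ((p+1).choose (i+2) : ℝ)
        ≤ 4^(i+2) * (1 + r^(2*p)) * ((p+1).choose (i+2) : ℝ) :=
          mul_le_mul_of_nonneg_right chain hch
      _ = ((p+1).choose (i+2) : ℝ) * 4^(i+2) * (1 + r^(2*p)) := by ring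
  -- assemble
  have hexp := expand_lem (r^2) (2*c+1) p
  have hrw : (r^2 + (2*c+1))^(p+1) - (r^2)^(p+1) - (p+1)*(2*c)*(r^2)^p
      = ((r^2 + (2*c+1))^(p+1) - (r^2)^(p+1) - (p+1)*(2*c+1)*(r^2)^p) + (p+1)*(r^2)^p := by
    ring
  rw [hrw, hexp]
  have habs : |(∑ i ∈ Finset.range p, (2*c+1)^(i+2) * (r^2)^(p-1-i) * ((p+1).choose (i+2) : ℝ))
      + (p+1)*(r^2)^p|
      ≤ (∑ i ∈ Finset.range p, ((p+1).choose (i+2) : ℝ) * 4^(i+2) * (1 + r^(2*p)))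
        + (p+1)*(r^2)^p := by
    apply le_trans (abs_add_le _ _)
    gcongr
    · exact le_trans (Finset.abs_sum_le_sum_abs _ _) (Finset.sum_le_sum hterm)
    · rw [abs_of_nonneg (by positivity)]
  apply le_trans habs
  have hsum : (∑ i ∈ Finset.range p, ((p+1).choose (i+2) : ℝ) * 4^(i+2) * (1 + r^(2*p)))
      ≤ 5^(p+1) * (1 + r^(2*p)) := by
    rw [← Finset.sum_mul]
    apply mul_le_mul_of_nonneg_right (coeff_sum p) (by linarith)
  have hlast : (p+1 : ℝ)*(r^2)^p ≤ (p+1) * (1 + r^(2*p)) := by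
    rw [← pow_mul]
    apply mul_le_mul_of_nonneg_left _ (by positivity)
    have := pow_le_one_add r hr (le_refl (2*p))
    linarith
  have := six_bound p
  nlinarith [hrp]

/-- For every integer `q ≥ 1`, vectors `n, n* ∈ ℝ^d`, standard basis vector `e_j`
and sign `ε ∈ {+1, −1}`:
`|‖n − n* + ε e_j‖₂^{2q} − ‖n − n*‖₂^{2q} − 2qε(n_j − n*_j)‖n − n*‖₂^{2q−2}|
  ≤ 3^q · 2^q · (1 + ‖n − n*‖₂^{2q−2})`. -/
theorem norm_pow_add_sign_single_estimate (d : ℕ) (q : ℕ) (hq : 1 ≤ q)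
    (n nstar : EuclideanSpace ℝ (Fin d)) (j : Fin d) (ε : ℝ) (hε : ε = 1 ∨ ε = -1) :
    |‖n - nstar + ε • EuclideanSpace.single j (1 : ℝ)‖ ^ (2 * q)
        - ‖n - nstar‖ ^ (2 * q)
        - 2 * (q : ℝ) * ε * (n j - nstar j) * ‖n - nstar‖ ^ (2 * q - 2)|
      ≤ 3 ^ q * 2 ^ q * (1 + ‖n - nstar‖ ^ (2 * q - 2)) := by
  obtain ⟨p, rfl⟩ : ∃ p, q = p + 1 := ⟨q - 1, (Nat.succ_pred_eq_of_pos hq).symm⟩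
  set m := n - nstar with hm
  have hmj : m j = n j - nstar j := rfl
  have hε2 : ε ^ 2 = 1 := by rcases hε with h | h <;> simp [h]
  have hεabs : |ε| = 1 := by rcases hε with h | h <;> simp [h]
  have habsj : |m j| ≤ ‖m‖ := by
    have := abs_real_inner_le_norm m (EuclideanSpace.single j (1 : ℝ))
    rw [EuclideanSpace.inner_single_right] at this
    simpa using this
  have hcle : |ε * m j| ≤ ‖m‖ := by rw [abs_mul, hεabs, one_mul]; exact habsj
  have hsq : ‖m + ε • EuclideanSpace.single j (1 : ℝ)‖ ^ 2
      = ‖m‖ ^ 2 + (2 * (ε * m j) + 1) := by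
    rw [norm_add_sq_real, real_inner_smul_right, norm_smul]
    have h1 : (inner ℝ m (EuclideanSpace.single j (1 : ℝ)) : ℝ) = m j := by
      rw [EuclideanSpace.inner_single_right]; simp
    rw [h1]
    simp [Real.norm_eq_abs, sq_abs, hε2]; ring
  have key' := key p ‖m‖ (ε * m j) (norm_nonneg m) hcle
  have e1 : ‖m + ε • EuclideanSpace.single j (1 : ℝ)‖ ^ (2 * (p + 1))
      = (‖m‖ ^ 2 + (2 * (ε * m j) + 1)) ^ (p + 1) := by rw [pow_mul, hsq]
  have e2 : ‖m‖ ^ (2 * (p + 1)) = (‖m‖ ^ 2) ^ (p + 1) := pow_mul _ _ _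
  have e3 : 2 * (p + 1) - 2 = 2 * p := by omega
  rw [e1, e2, e3, show (3:ℝ) ^ (p+1) * 2 ^ (p+1) = 6 ^ (p+1) by rw [← mul_pow]; norm_num]
  have e4 : 2 * ((p + 1 : ℕ) : ℝ) * ε * (n j - nstar j) * ‖m‖ ^ (2 * p)
      = ((p : ℝ) + 1) * (2 * (ε * m j)) * (‖m‖ ^ 2) ^ p := by
    rw [← pow_mul, ← hmj]; push_cast; ring
  rw [e4]
  exact key'
end

section
/- Let X : ℝ_{≥0}^d → ℝ^d be a vector field, x* a point in the interior of ℝ_{≥0}^d with X(x*) = 0, and suppose there exist β > 0 and R > ‖x*‖₂ such that ⟨X(x), x − x*⟩ ≤ −β ‖x‖₂ ‖x − x*‖₂² for all x ∈ ℝ_{≥0}^d with ‖x‖₂ < R. If X is differentiable at x* with Jacobian M* = DX(x*), then the symmetric matrix M* + (M*)ᵀ is negative semidefinite; in particular every eigenvalue of M* has nonpositive real part. -/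
open Matrix Filter
open scoped RealInnerProductSpace Topology

set_option maxHeartbeats 1000000 in
lemma re_nonpos_of_quadform (d : ℕ) (M : Matrix (Fin d) (Fin d) ℝ)
    (h : ∀ v : Fin d → ℝ, v ⬝ᵥ M.mulVec v ≤ 0) :
    ∀ z ∈ spectrum ℂ (M.map (algebraMap ℝ ℂ)), z.re ≤ 0 := by
  intro z hz
  set A := M.map (algebraMap ℝ ℂ) with hA
  have hz' : z ∈ spectrum ℂ (Matrix.toLinAlgEquiv' A) := by
    rw [AlgEquiv.spectrum_eq]; exact hz
  have hev : Module.End.HasEigenvalue (Matrix.toLinAlgEquiv' A : Module.End ℂ (Fin d → ℂ)) z :=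
    Module.End.hasEigenvalue_iff_mem_spectrum.2 hz'
  obtain ⟨v, hv⟩ := hev.exists_hasEigenvector
  have hvm : A.mulVec v = z • v := by
    have := hv.apply_eq_smul
    simpa [Matrix.toLinAlgEquiv'_apply] using this
  have hv0 : v ≠ 0 := hv.right
  set a : Fin d → ℝ := fun i => (v i).re with ha
  set b : Fin d → ℝ := fun i => (v i).im with hb
  set N : ℝ := ∑ i, Complex.normSq (v i) with hN
  have hNpos : 0 < N := by
    obtain ⟨i, hi⟩ := Function.ne_iff.1 hv0
    exact Finset.sum_pos' (fun j _ => Complex.normSq_nonneg _)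
      ⟨i, Finset.mem_univ i, by simpa using Complex.normSq_pos.2 hi⟩
  have hS : (star v ⬝ᵥ A.mulVec v) = z * (N : ℂ) := by
    rw [hvm, hN]
    push_cast
    simp only [dotProduct, Pi.smul_apply, smul_eq_mul, Pi.star_apply, Finset.mul_sum,
      Complex.star_def]
    refine Finset.sum_congr rfl fun i _ => ?_
    rw [Complex.normSq_eq_conj_mul_self]
    ring
  have hL : (star v ⬝ᵥ A.mulVec v).re = a ⬝ᵥ M.mulVec a + b ⬝ᵥ M.mulVec b := by
    simp only [dotProduct, mulVec, dotProduct, Complex.re_sum, Pi.star_apply, Complex.star_def]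
    rw [← Finset.sum_add_distrib]
    refine Finset.sum_congr rfl fun i _ => ?_
    have hre2 : (∑ j, A i j * v j).re = ∑ j, M i j * a j := by
      rw [Complex.re_sum]
      refine Finset.sum_congr rfl fun j _ => ?_
      simp [hA, Matrix.map_apply, Complex.mul_re, ha]
    have him2 : (∑ j, A i j * v j).im = ∑ j, M i j * b j := by
      rw [Complex.im_sum]
      refine Finset.sum_congr rfl fun j _ => ?_
      simp [hA, Matrix.map_apply, Complex.mul_im, hb]
    rw [Complex.mul_re, hre2, him2, Complex.conj_re, Complex.conj_im]
    simp only [ha, hb]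
    ring
  have hre : a ⬝ᵥ M.mulVec a + b ⬝ᵥ M.mulVec b = z.re * N := by
    have h1 := congrArg Complex.re hS
    rw [hL] at h1
    simpa using h1
  nlinarith [h a, h b, hNpos, hre]

/-- Let `X` be a vector field on `ℝ_{≥0}^d`, `x*` an interior fixed point (`X x* = 0`,
all coordinates positive) such that for some `β > 0` and `R > ‖x*‖`, every `x` in the
nonnegative orthant with `‖x‖ < R` satisfies `⟨X(x), x − x*⟩ ≤ −β‖x‖‖x − x*‖²`.
If `X` is differentiable at `x*` with Jacobian `M`, then `M + Mᵀ` is negative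
semidefinite; in particular every eigenvalue of `M` has nonpositive real part. -/
theorem jacobian_neg_semidef_of_attracting (d : ℕ)
    (X : EuclideanSpace ℝ (Fin d) → EuclideanSpace ℝ (Fin d))
    (xstar : EuclideanSpace ℝ (Fin d)) (β R : ℝ)
    (M : Matrix (Fin d) (Fin d) ℝ)
    (hxstar : ∀ i, 0 < xstar i) (hX0 : X xstar = 0)
    (hβ : 0 < β) (hR : ‖xstar‖ < R)
    (hineq : ∀ x : EuclideanSpace ℝ (Fin d), (∀ i, 0 ≤ x i) → ‖x‖ < R →
      ⟪X x, x - xstar⟫ ≤ -β * ‖x‖ * ‖x - xstar‖ ^ 2)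
    (hdiff : HasFDerivAt X
      (LinearMap.toContinuousLinearMap (Matrix.toEuclideanLin M)) xstar) :
    (∀ v : Fin d → ℝ, v ⬝ᵥ (M + Mᵀ).mulVec v ≤ 0) ∧
    (∀ z ∈ spectrum ℂ (M.map (algebraMap ℝ ℂ)), z.re ≤ 0) := by
  have key : ∀ v0 : Fin d → ℝ, v0 ⬝ᵥ M.mulVec v0 ≤ 0 := by
    intro v0
    set v : EuclideanSpace ℝ (Fin d) := WithLp.toLp 2 v0 with hv
    -- the curve t ↦ xstar + t • v
    set g : ℝ → EuclideanSpace ℝ (Fin d) := fun t => X (xstar + t • v) with hg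
    have hcurve : HasDerivAt (fun t : ℝ => xstar + t • v) v 0 := by
      simpa using ((hasDerivAt_id (0:ℝ)).smul_const v).const_add xstar
    have hgd : HasDerivAt g ((Matrix.toEuclideanLin M) v) 0 := by
      have h0 : HasFDerivAt X (LinearMap.toContinuousLinearMap (Matrix.toEuclideanLin M))
          (xstar + (0:ℝ) • v) := by simpa using hdiff
      exact h0.comp_hasDerivAt 0 hcurve
    have hslope : Tendsto (fun t : ℝ => ⟪t⁻¹ • g t, v⟫) (𝓝[>] (0:ℝ))
        (𝓝 ⟪(Matrix.toEuclideanLin M) v, v⟫) := by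
      have h1 := hasDerivAt_iff_tendsto_slope.1 hgd
      have h2 : Tendsto (slope g 0) (𝓝[>] (0:ℝ)) (𝓝 ((Matrix.toEuclideanLin M) v)) :=
        h1.mono_left (nhdsWithin_mono 0 (fun t ht => ne_of_gt ht))
      have h3 : ∀ t : ℝ, slope g 0 t = t⁻¹ • g t := by
        intro t; simp [slope_def_module, hg, hX0]
      have h4 : Tendsto (fun t : ℝ => t⁻¹ • g t) (𝓝[>] (0:ℝ)) (𝓝 ((Matrix.toEuclideanLin M) v)) := by
        simpa [funext h3] using h2
      exact h4.inner tendsto_const_nhds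
    have hev : ∀ᶠ t in 𝓝[>] (0:ℝ), ⟪t⁻¹ • g t, v⟫ ≤ 0 := by
      have hcoord : ∀ i : Fin d, ∀ᶠ t in 𝓝 (0:ℝ), 0 ≤ (xstar + t • v) i := by
        intro i
        have hc : Tendsto (fun t : ℝ => xstar i + t * v i) (𝓝 0) (𝓝 (xstar i)) := by
          have hcc : Continuous (fun t : ℝ => xstar i + t * v i) := continuous_const.add (continuous_id.mul continuous_const)
          simpa using hcc.tendsto 0
        filter_upwards [hc.eventually (eventually_gt_nhds (hxstar i))] with t ht
        have : (xstar + t • v) i = xstar i + t * v i := rfl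
        rw [this]; exact le_of_lt ht
      have hnorm : ∀ᶠ t in 𝓝 (0:ℝ), ‖xstar + t • v‖ < R := by
        have hcc : Continuous fun t : ℝ => xstar + t • v := continuous_const.add (continuous_id.smul continuous_const)
        have hc : Tendsto (fun t : ℝ => ‖xstar + t • v‖) (𝓝 0) (𝓝 ‖xstar‖) := by
          simpa using hcc.norm.tendsto 0
        exact hc.eventually (eventually_lt_nhds hR)
      have hall : ∀ᶠ t in 𝓝 (0:ℝ), (∀ i, 0 ≤ (xstar + t • v) i) ∧ ‖xstar + t • v‖ < R :=
        (Filter.eventually_all.2 hcoord).and hnorm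
      filter_upwards [nhdsWithin_le_nhds hall, self_mem_nhdsWithin] with t ht htpos
      have htpos' : (0:ℝ) < t := htpos
      have hI := hineq (xstar + t • v) ht.1 ht.2
      have hsub : (xstar + t • v) - xstar = t • v := by abel
      rw [hsub] at hI
      have hIn : ⟪X (xstar + t • v), t • v⟫ = t * ⟪X (xstar + t • v), v⟫ :=
        real_inner_smul_right _ _ _
      have hrhs : -β * ‖xstar + t • v‖ * ‖t • v‖ ^ 2 ≤ 0 := by
        have h1 : (0:ℝ) ≤ ‖xstar + t • v‖ := norm_nonneg _
        have h2 : (0:ℝ) ≤ ‖t • v‖ ^ 2 := sq_nonneg _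
        have h3 := mul_nonneg (mul_nonneg hβ.le h1) h2
        nlinarith
      have hmul : t * ⟪X (xstar + t • v), v⟫ ≤ 0 := by
        rw [← hIn]; exact le_trans hI hrhs
      have hc : ⟪X (xstar + t • v), v⟫ ≤ 0 := by nlinarith
      have : ⟪t⁻¹ • g t, v⟫ = t⁻¹ * ⟪X (xstar + t • v), v⟫ := real_inner_smul_left _ _ _
      rw [this]
      have hti : (0:ℝ) ≤ t⁻¹ := inv_nonneg.2 htpos'.le
      nlinarith
    have hlim : ⟪(Matrix.toEuclideanLin M) v, v⟫ ≤ 0 := le_of_tendsto hslope hev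
    have heq : ⟪(Matrix.toEuclideanLin M) v, v⟫ = M.mulVec v0 ⬝ᵥ v0 := by
      simp [PiLp.inner_apply, Matrix.toEuclideanLin_apply, dotProduct,
        hv]
      exact Finset.sum_congr rfl fun i _ => mul_comm _ _
    calc v0 ⬝ᵥ M.mulVec v0 = M.mulVec v0 ⬝ᵥ v0 := dotProduct_comm _ _
      _ = ⟪(Matrix.toEuclideanLin M) v, v⟫ := heq.symm
      _ ≤ 0 := hlim
  constructor
  · intro w
    have h1 := key w
    have hsplit : w ⬝ᵥ (M + Mᵀ).mulVec w = w ⬝ᵥ M.mulVec w + w ⬝ᵥ Mᵀ.mulVec w := by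
      rw [Matrix.add_mulVec, dotProduct_add]
    have h2 : w ⬝ᵥ Mᵀ.mulVec w = w ⬝ᵥ M.mulVec w := by
      rw [Matrix.mulVec_transpose, dotProduct_comm, ← Matrix.dotProduct_mulVec]
    rw [hsplit, h2]
    linarith
  · exact re_nonpos_of_quadform d M key
end

section
/- Let ν be a probability measure on ℤ_{≥0}^d, D ⊂ ℤ_{≥0}^d a set, and suppose: (i) ∫ e^{‖n‖₁} dν(n) ≤ 2e^{cK} for some constants c > 0 and K ≥ 1, and (ii) ν(D^c) ≤ e^{−bK} for some b > 0. Then for every integer q ≥ 0, ∫_{D^c} ‖n‖₁^q dν(n) ≤ q^q e^{−q} K^q · (2 e^{cK})^{1/K} · e^{−bK(1 − 1/K)}. -/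
open MeasureTheory

lemma real_key_bound (q : ℕ) (K : ℝ) (hK : 1 ≤ K) (x : ℝ) (hx : 0 ≤ x) :
    x ^ q ≤ (q : ℝ) ^ q * Real.exp (-(q : ℝ)) * K ^ q * Real.exp (x / K) := by
  have hK0 : (0 : ℝ) < K := lt_of_lt_of_le one_pos hK
  rcases Nat.eq_zero_or_pos q with hq | hq
  · subst hq
    simpa using Real.one_le_exp (div_nonneg hx hK0.le)
  · have hq0 : (0 : ℝ) < q := by exact_mod_cast hq
    set t : ℝ := x / K with ht_def
    have ht : 0 ≤ t := div_nonneg hx hK0.le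
    have h1 : t ≤ q * Real.exp (t / q - 1) := by
      have h2 := Real.add_one_le_exp (t / q - 1)
      have h3 : t / q ≤ Real.exp (t / q - 1) := by linarith
      calc t = q * (t / q) := by field_simp
        _ ≤ q * Real.exp (t / q - 1) := by
            exact mul_le_mul_of_nonneg_left h3 hq0.le
    have h2 : t ^ q ≤ (q * Real.exp (t / q - 1)) ^ q := pow_le_pow_left₀ ht h1 q
    have h3 : ((q : ℝ) * Real.exp (t / q - 1)) ^ q = (q : ℝ) ^ q * Real.exp (t - q) := by
      rw [mul_pow, ← Real.exp_nat_mul]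
      congr 1
      field_simp
    have h4 : t ^ q ≤ (q : ℝ) ^ q * Real.exp (t - q) := h3 ▸ h2
    have h5 : x ^ q = K ^ q * t ^ q := by
      rw [ht_def, div_pow]
      field_simp
    have h6 : Real.exp (t - (q : ℝ)) = Real.exp t * Real.exp (-(q : ℝ)) := by
      rw [← Real.exp_add]; ring_nf
    calc x ^ q = K ^ q * t ^ q := h5
      _ ≤ K ^ q * ((q : ℝ) ^ q * Real.exp (t - (q : ℝ))) :=
          mul_le_mul_of_nonneg_left h4 (by positivity)
      _ = (q : ℝ) ^ q * Real.exp (-(q : ℝ)) * K ^ q * Real.exp (x / K) := by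
          rw [h6, ht_def]; ring

/-- Let `ν` be a probability measure on `ℤ_{≥0}^d`, `D` a set, and suppose
(i) `∫ e^{‖n‖₁} dν(n) ≤ 2e^{cK}` for constants `c > 0`, `K ≥ 1`, and
(ii) `ν(Dᶜ) ≤ e^{−bK}` for some `b > 0`.  Then for every integer `q ≥ 0`,
`∫_{Dᶜ} ‖n‖₁^q dν(n) ≤ q^q e^{−q} K^q (2e^{cK})^{1/K} e^{−bK(1 − 1/K)}`. -/
theorem moment_bound_on_complement (d : ℕ) (ν : Measure (Fin d → ℕ))
    [IsProbabilityMeasure ν] (D : Set (Fin d → ℕ))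
    (c b K : ℝ) (hc : 0 < c) (hb : 0 < b) (hK : 1 ≤ K)
    (h1 : ∫⁻ n, ENNReal.ofReal (Real.exp (∑ i, (n i : ℝ))) ∂ν
        ≤ ENNReal.ofReal (2 * Real.exp (c * K)))
    (h2 : ν Dᶜ ≤ ENNReal.ofReal (Real.exp (-(b * K)))) :
    ∀ q : ℕ,
      ∫⁻ n in Dᶜ, ENNReal.ofReal ((∑ i, (n i : ℝ)) ^ q) ∂ν
        ≤ ENNReal.ofReal ((q : ℝ) ^ q * Real.exp (-(q : ℝ)) * K ^ q *
            (2 * Real.exp (c * K)) ^ (1 / K) * Real.exp (-(b * K) * (1 - 1 / K))) := by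
  intro q
  have hK0 : (0 : ℝ) < K := lt_of_lt_of_le one_pos hK
  set S : (Fin d → ℕ) → ℝ := fun n => ∑ i, (n i : ℝ) with hS
  have hSnn : ∀ n, 0 ≤ S n := fun n => Finset.sum_nonneg fun i _ => Nat.cast_nonneg _
  set f : (Fin d → ℕ) → ENNReal := fun n => ENNReal.ofReal (Real.exp (S n / K)) with hf
  -- Hölder step
  have holder : ∫⁻ n in Dᶜ, f n ∂ν
      ≤ ENNReal.ofReal ((2 * Real.exp (c * K)) ^ (1 / K)) *
        ENNReal.ofReal (Real.exp (-(b * K) * (1 - 1 / K))) := by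
    rcases eq_or_lt_of_le hK with hK1 | hK1
    · -- K = 1
      subst hK1
      have hle : ∫⁻ n in Dᶜ, f n ∂ν ≤ ENNReal.ofReal (2 * Real.exp (c * 1)) :=
        le_trans (setLIntegral_le_lintegral _ _) (by simpa [hf, hS] using h1)
      refine le_trans hle (le_of_eq ?_)
      norm_num
    · -- K > 1
      set p := Real.conjExponent K with hp
      have hpq : K.HolderConjugate p := Real.HolderConjugate.conjExponent hK1
      have hDm : MeasurableSet (Dᶜ) := (Set.to_countable _).measurableSet
      set g : (Fin d → ℕ) → ENNReal := Dᶜ.indicator (fun _ => (1 : ENNReal)) with hg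
      have hfg : ∀ n, (f * g) n = Dᶜ.indicator f n := by
        intro n
        by_cases hn : n ∈ Dᶜ <;> simp [hg, Set.indicator_of_mem, Set.indicator_of_notMem, hn]
      have hstep : ∫⁻ n in Dᶜ, f n ∂ν = ∫⁻ n, (f * g) n ∂ν := by
        rw [← lintegral_indicator hDm]
        exact lintegral_congr fun n => (hfg n).symm
      have hHold := ENNReal.lintegral_mul_le_Lp_mul_Lq ν hpq
        (measurable_of_countable f).aemeasurable (measurable_of_countable g).aemeasurable
      -- f ^ K factor
      have hfK : ∀ n, f n ^ K = ENNReal.ofReal (Real.exp (S n)) := by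
        intro n
        rw [hf, ENNReal.ofReal_rpow_of_pos (Real.exp_pos _), ← Real.exp_mul,
          div_mul_cancel₀ _ hK0.ne']
      have hF1 : (∫⁻ n, f n ^ K ∂ν) ^ (1 / K)
          ≤ ENNReal.ofReal ((2 * Real.exp (c * K)) ^ (1 / K)) := by
        rw [← ENNReal.ofReal_rpow_of_pos (by positivity)]
        refine ENNReal.rpow_le_rpow ?_ (by positivity)
        simp only [hfK]
        exact h1
      -- g ^ p factor
      have hgp : ∀ n, g n ^ p = g n := by
        intro n
        by_cases hn : n ∈ Dᶜ <;>
          simp [hg, Set.indicator_of_mem, Set.indicator_of_notMem, hn,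
            ENNReal.zero_rpow_of_pos hpq.symm.pos]
      have hG0 : ∫⁻ n, g n ^ p ∂ν = ν Dᶜ := by
        simp only [hgp]
        simp only [hg]
        rw [lintegral_indicator hDm]
        simp
      have hinvp : 1 / p = 1 - 1 / K := by
        rw [one_div, one_div, ← hpq.one_sub_inv]
      have hG1 : (∫⁻ n, g n ^ p ∂ν) ^ (1 / p)
          ≤ ENNReal.ofReal (Real.exp (-(b * K) * (1 - 1 / K))) := by
        rw [hG0]
        calc (ν Dᶜ) ^ (1 / p) ≤ (ENNReal.ofReal (Real.exp (-(b * K)))) ^ (1 / p) :=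
              ENNReal.rpow_le_rpow h2 (one_div_nonneg.mpr hpq.symm.nonneg)
          _ = ENNReal.ofReal (Real.exp (-(b * K) * (1 - 1 / K))) := by
              rw [ENNReal.ofReal_rpow_of_pos (Real.exp_pos _), ← Real.exp_mul, hinvp]
      calc ∫⁻ n in Dᶜ, f n ∂ν = ∫⁻ n, (f * g) n ∂ν := hstep
        _ ≤ (∫⁻ n, f n ^ K ∂ν) ^ (1 / K) * (∫⁻ n, g n ^ p ∂ν) ^ (1 / p) := hHold
        _ ≤ _ := mul_le_mul' hF1 hG1
  -- pointwise bound and combine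
  set C : ℝ := (q : ℝ) ^ q * Real.exp (-(q : ℝ)) * K ^ q with hC
  have hCnn : 0 ≤ C := by positivity
  have hpt : ∀ n, ENNReal.ofReal (S n ^ q) ≤ ENNReal.ofReal C * f n := by
    intro n
    rw [hf, ← ENNReal.ofReal_mul hCnn]
    exact ENNReal.ofReal_le_ofReal (real_key_bound q K hK (S n) (hSnn n))
  calc ∫⁻ n in Dᶜ, ENNReal.ofReal (S n ^ q) ∂ν
      ≤ ∫⁻ n in Dᶜ, ENNReal.ofReal C * f n ∂ν := lintegral_mono hpt
    _ = ENNReal.ofReal C * ∫⁻ n in Dᶜ, f n ∂ν :=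
        lintegral_const_mul' _ _ ENNReal.ofReal_ne_top
    _ ≤ ENNReal.ofReal C * (ENNReal.ofReal ((2 * Real.exp (c * K)) ^ (1 / K)) *
          ENNReal.ofReal (Real.exp (-(b * K) * (1 - 1 / K)))) :=
        mul_le_mul_right holder _
    _ = ENNReal.ofReal (C * (2 * Real.exp (c * K)) ^ (1 / K) *
          Real.exp (-(b * K) * (1 - 1 / K))) := by
        rw [← ENNReal.ofReal_mul (by positivity), ← ENNReal.ofReal_mul hCnn]
        congr 1
        rw [hC]
        ring
end
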